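/- If v ∈ RG satisfies v = v^T and v² = 0, then the row space of σ(v) over R is a self-orthogonal code: any two rows of σ(v) have Euclidean inner product zero. -/

import Mathlib

/-- The matrix σ(v) of a group ring element, with (i,j) entry the coefficient of i⁻¹ * j. -/
noncomputable def sigmaMat {R G : Type*} [Semiring R] [Group G] (v : MonoidAlgebra R G) :
    Matrix G G R := Matrix.of fun i j => v.coeff (i⁻¹ * j)

/-- The canonical involution on a group ring, sending Σ αᵢ gᵢ to Σ αᵢ gᵢ⁻¹. -/
noncomputable def transInvol {R G : Type*} [Semiring R] [Group G] (v : MonoidAlgebra R G) :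
    MonoidAlgebra R G := MonoidAlgebra.ofCoeff (Finsupp.equivMapDomain (Equiv.inv G) v.coeff)

lemma mul_conv {R G : Type*} [Semiring R] [Group G] [Fintype G]
    (f g : MonoidAlgebra R G) (a : G) : (f * g).coeff a = ∑ k : G, f.coeff k * g.coeff (k⁻¹ * a) := by
  classical
  rw [MonoidAlgebra.coeff_mul]
  rw [Finsupp.sum_fintype _ _ (by simp)]
  refine Finset.sum_congr rfl fun k _ => ?_
  rw [Finsupp.sum_fintype _ _ (by simp)]
  rw [Finset.sum_eq_single (k⁻¹ * a)]
  · simp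
  · intro b _ hb
    rw [if_neg]
    intro h; exact hb (by rw [← h]; group)
  · intro h; exact absurd (Finset.mem_univ _) h

/-- If v = vᵀ and v² = 0 then the row space of σ(v) is self-orthogonal. -/
theorem stmt_4 (R G : Type*) [CommRing R] [Fintype R] [Group G] [Fintype G]
    (v : MonoidAlgebra R G) (hvT : transInvol v = v) (hv2 : v * v = 0) :
    ∀ x ∈ Submodule.span R (Set.range fun i => sigmaMat v i),
      ∀ y ∈ Submodule.span R (Set.range fun i => sigmaMat v i),
        ∑ k : G, x k * y k = 0 := by
  have hsym : ∀ g : G, v.coeff g⁻¹ = v.coeff g := by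
    intro g
    conv_rhs => rw [← hvT]
    rfl
  have key : ∀ i j : G, ∑ k : G, sigmaMat v i k * sigmaMat v j k = 0 := by
    intro i j
    have : ∑ k : G, sigmaMat v i k * sigmaMat v j k = (v * v).coeff (i⁻¹ * j) := by
      rw [mul_conv]
      conv_rhs => rw [← Equiv.sum_comp (Equiv.mulLeft i⁻¹) (fun k => v.coeff k * v.coeff (k⁻¹ * (i⁻¹ * j)))]
      refine Finset.sum_congr rfl fun k _ => ?_
      simp only [Equiv.coe_mulLeft, sigmaMat, Matrix.of_apply]
      congr 1
      rw [show (i⁻¹ * k)⁻¹ * (i⁻¹ * j) = k⁻¹ * j by group, ← hsym (k⁻¹ * j)]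
      congr 1
      group
    rw [this, hv2]; rfl
  intro x hx y hy
  induction hx, hy using Submodule.span_induction₂ with
  | mem_mem a b ha hb =>
    obtain ⟨i, rfl⟩ := ha
    obtain ⟨j, rfl⟩ := hb
    exact key i j
  | zero_left y hy => simp
  | zero_right x hx => simp
  | add_left x y z hx hy hz h1 h2 =>
    simp only [Pi.add_apply, add_mul, Finset.sum_add_distrib, h1, h2, add_zero]
  | add_right x y z hx hy hz h1 h2 =>
    simp only [Pi.add_apply, mul_add, Finset.sum_add_distrib, h1, h2, add_zero]
  | smul_left r x y hx hy h =>
    simp only [Pi.smul_apply, smul_eq_mul, mul_assoc, ← Finset.mul_sum, h, mul_zero]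
  | smul_right r x y hx hy h =>
    simp only [Pi.smul_apply, smul_eq_mul, mul_left_comm, ← Finset.mul_sum, h, mul_zero]
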